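/- Let p be a prime number, d ≥ 1, and let f₁, …, f_d be restricted power series over ℤ_p in d variables such that for each i all coefficients of f_i − z_i lie in p·ℤ_p (that is, each f_i is congruent to the coordinate variable z_i modulo p). Then the map F : ℤ_p^d → ℤ_p^d whose i-th coordinate is x ↦ f_i(x) is a bijection, and there exist restricted power series g₁, …, g_d over ℤ_p in d variables, with all coefficients of g_i − z_i in p·ℤ_p, such that the map with coordinates x ↦ g_i(x) is the inverse of F. -/

import Mathlib

open Filter MvPowerSeries

namespace RPSHensel

variable {p : ℕ} [Fact p.Prime]

/-! ### Basic `ℤ_[p]` divisibility helpers -/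

lemma pdvd_iff_norm (m : ℕ) (z : ℤ_[p]) :
    (p : ℤ_[p]) ^ m ∣ z ↔ ‖z‖ ≤ (p : ℝ) ^ (-(m : ℤ)) :=
  ((PadicInt.norm_le_pow_iff_mem_span_pow z m).trans Ideal.mem_span_singleton).symm

lemma tendsto_pow_neg : Tendsto (fun m : ℕ => (p : ℝ) ^ (-(m : ℤ))) atTop (nhds 0) := by
  have hp1 : (1 : ℝ) < (p : ℝ) := by
    exact_mod_cast (Fact.out : p.Prime).one_lt
  have h0 : (0 : ℝ) ≤ (p : ℝ)⁻¹ := by positivity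
  have h1 : (p : ℝ)⁻¹ < 1 := inv_lt_one_of_one_lt₀ hp1
  have := tendsto_pow_atTop_nhds_zero_of_lt_one h0 h1
  convert this using 2 with m
  rw [zpow_neg, zpow_natCast, inv_pow]

lemma eq_of_forall_pdvd {z w : ℤ_[p]} (h : ∀ m : ℕ, (p : ℤ_[p]) ^ m ∣ z - w) : z = w := by
  have hb : ∀ m : ℕ, ‖z - w‖ ≤ (p : ℝ) ^ (-(m : ℤ)) := fun m => (pdvd_iff_norm m _).1 (h m)
  have : ‖z - w‖ ≤ 0 :=
    le_of_tendsto_of_tendsto' tendsto_const_nhds tendsto_pow_neg hb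
  have : z - w = 0 := by
    rw [← norm_le_zero_iff]; exact this
  exact sub_eq_zero.1 this

lemma pdvd_tsum {ι : Type*} (m : ℕ) {f : ι → ℤ_[p]} (hf : Summable f)
    (h : ∀ i, (p : ℤ_[p]) ^ m ∣ f i) : (p : ℤ_[p]) ^ m ∣ ∑' i, f i := by
  rw [pdvd_iff_norm]
  have hcl : IsClosed {z : ℤ_[p] | ‖z‖ ≤ (p : ℝ) ^ (-(m : ℤ))} :=
    isClosed_le continuous_norm continuous_const
  refine hcl.mem_of_tendsto hf.hasSum (Filter.Eventually.of_forall fun s => ?_)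
  exact (pdvd_iff_norm m _).1 (Finset.dvd_sum fun i _ => h i)

lemma summable_of_pdvd_cofinite {ι : Type*} {f : ι → ℤ_[p]}
    (h : ∀ m : ℕ, {i : ι | ¬ (p : ℤ_[p]) ^ m ∣ f i}.Finite) : Summable f := by
  refine NonarchimedeanAddGroup.summable_of_tendsto_cofinite_zero ?_
  rw [NormedAddCommGroup.tendsto_nhds_zero]
  intro ε hε
  obtain ⟨m, hm⟩ := PadicInt.exists_pow_neg_lt p hε
  rw [Filter.eventually_cofinite]
  refine ((h m).subset fun i hi => ?_)
  simp only [Set.mem_setOf_eq, not_lt] at hi ⊢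
  intro hdvd
  exact absurd (lt_of_le_of_lt ((pdvd_iff_norm m _).1 hdvd) hm) (not_lt.2 hi)

/-! ### Generic ring divisibility of products -/

lemma dvd_prod_sub_prod {R : Type*} [CommRing R] {ι : Type*} (s : Finset ι) (c : R)
    (x y : ι → R) (h : ∀ j, c ∣ x j - y j) :
    c ∣ ∏ j ∈ s, x j - ∏ j ∈ s, y j := by
  classical
  induction s using Finset.induction with
  | empty => simp
  | insert a s' hnotmem ih =>
    rw [Finset.prod_insert hnotmem, Finset.prod_insert hnotmem]
    have : x a * ∏ j ∈ s', x j - y a * ∏ j ∈ s', y j =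
        x a * (∏ j ∈ s', x j - ∏ j ∈ s', y j) + (x a - y a) * ∏ j ∈ s', y j := by ring
    rw [this]
    exact dvd_add (ih.mul_left _) ((h a).mul_right _)

lemma dvd_prodpow_sub {R : Type*} [CommRing R] {ι : Type*} (s : Finset ι) (c : R)
    (x y : ι → R) (h : ∀ j, c ∣ x j - y j) (n : ι → ℕ) :
    c ∣ ∏ j ∈ s, x j ^ n j - ∏ j ∈ s, y j ^ n j :=
  dvd_prod_sub_prod s c _ _ fun j => (h j).trans (sub_dvd_pow_sub_pow _ _ _)



variable {p : ℕ} [Fact p.Prime] {d : ℕ}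

local notation "S" => MvPowerSeries (Fin d) ℤ_[p]
local notation "M" => (Fin d →₀ ℕ)

/-- Restricted (Tate) power series predicate. -/
def RsS (f : MvPowerSeries (Fin d) ℤ_[p]) : Prop :=
  ∀ m : ℕ, {K : Fin d →₀ ℕ | ¬ (p : ℤ_[p]) ^ m ∣ coeff (R := ℤ_[p]) K f}.Finite

lemma rsS_of_finite_support (f : S) (h : (Function.support fun K => coeff (R := ℤ_[p]) K f).Finite) :
    RsS f := fun m => h.subset fun K hK => by
  simp only [Function.mem_support]
  intro h0
  rw [Set.mem_setOf_eq, h0] at hK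
  exact hK (dvd_zero _)

lemma rsS_X (i : Fin d) : RsS (X i : S) := by
  classical
  refine rsS_of_finite_support _ ((Set.finite_singleton (Finsupp.single i 1)).subset ?_)
  intro K hK
  simp only [Function.mem_support, coeff_X] at hK
  by_contra h
  simp only [Set.mem_singleton_iff] at h
  rw [if_neg h] at hK
  exact hK rfl

lemma rsS_one : RsS (1 : S) := by
  classical
  refine rsS_of_finite_support _ ((Set.finite_singleton (0 : Fin d →₀ ℕ)).subset ?_)
  intro K hK
  simp only [Function.mem_support, coeff_one] at hK
  by_contra h
  simp only [Set.mem_singleton_iff] at h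
  rw [if_neg h] at hK
  exact hK rfl

lemma RsS.add {f g : S} (hf : RsS f) (hg : RsS g) : RsS (f + g) := fun m =>
  ((hf m).union (hg m)).subset fun K hK => by
    simp only [Set.mem_setOf_eq, Set.mem_union] at hK ⊢
    by_contra h
    push_neg at h
    exact hK (by rw [map_add]; exact dvd_add h.1 h.2)

lemma RsS.neg {f : S} (hf : RsS f) : RsS (-f) := fun m =>
  (hf m).subset fun K hK => by
    simp only [Set.mem_setOf_eq, map_neg, dvd_neg] at hK ⊢
    exact hK

lemma RsS.sub {f g : S} (hf : RsS f) (hg : RsS g) : RsS (f - g) := by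
  rw [sub_eq_add_neg]; exact hf.add hg.neg

lemma RsS.mul {f g : S} (hf : RsS f) (hg : RsS g) : RsS (f * g) := by
  classical
  intro m
  refine (((hf m).prod (hg m)).image fun q => q.1 + q.2).subset ?_
  intro K hK
  simp only [Set.mem_setOf_eq, coeff_mul] at hK
  have hex : ∃ q ∈ Finset.HasAntidiagonal.antidiagonal K,
      ¬ (p : ℤ_[p]) ^ m ∣ coeff (R := ℤ_[p]) q.1 f * coeff (R := ℤ_[p]) q.2 g := by
    by_contra h
    push_neg at h
    exact hK (Finset.dvd_sum fun q hq => h q hq)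
  obtain ⟨q, hq, hqd⟩ := hex
  refine ⟨q, ⟨?_, ?_⟩, Finset.HasAntidiagonal.mem_antidiagonal.1 hq⟩
  · intro h1; exact hqd (h1.mul_right _)
  · intro h2; exact hqd (h2.mul_left _)

lemma RsS.pow {f : S} (hf : RsS f) (n : ℕ) : RsS (f ^ n) := by
  induction n with
  | zero => simpa using rsS_one
  | succ n ih => rw [pow_succ]; exact ih.mul hf

lemma rsS_prod {ι : Type*} (s : Finset ι) (g : ι → S) (hg : ∀ j ∈ s, RsS (g j)) :
    RsS (∏ j ∈ s, g j) :=
  Finset.prod_induction g RsS (fun _ _ ha hb => ha.mul hb) rsS_one hg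

/-- Divisibility by a constant is coefficientwise divisibility. -/
lemma constC_dvd_iff (c : ℤ_[p]) (s : S) :
    (C (σ := Fin d) (R := ℤ_[p]) c) ∣ s ↔ ∀ K, c ∣ coeff (R := ℤ_[p]) K s := by
  constructor
  · rintro ⟨t, rfl⟩ K
    rw [coeff_C_mul]
    exact Dvd.intro _ rfl
  · intro h
    let t : S := fun K => (h K).choose
    refine ⟨t, MvPowerSeries.ext fun K => ?_⟩
    rw [coeff_C_mul]
    exact (h K).choose_spec



/-! ### Evaluation -/

/-- Evaluation of a power series at a point of `ℤ_p^d`. -/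
noncomputable def evS (f : S) (x : Fin d → ℤ_[p]) : ℤ_[p] :=
  ∑' K : Fin d →₀ ℕ, coeff (R := ℤ_[p]) K f * ∏ j, x j ^ K j

lemma summable_evS {f : S} (hf : RsS f) (x : Fin d → ℤ_[p]) :
    Summable (fun K : Fin d →₀ ℕ => coeff (R := ℤ_[p]) K f * ∏ j, x j ^ K j) := by
  refine summable_of_pdvd_cofinite fun m => (hf m).subset fun K hK => ?_
  simp only [Set.mem_setOf_eq] at hK ⊢
  intro h; exact hK (h.mul_right _)

lemma prodpow_single (x : Fin d → ℤ_[p]) (i : Fin d) :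
    (∏ j, x j ^ (Finsupp.single i 1) j) = x i := by
  classical
  rw [Finset.prod_eq_single i]
  · simp
  · intro j _ hj
    rw [Finsupp.single_apply, if_neg (fun h => hj h.symm), pow_zero]
  · intro h; exact absurd (Finset.mem_univ i) h

lemma evS_X (i : Fin d) (x : Fin d → ℤ_[p]) : evS (X i : S) x = x i := by
  classical
  rw [evS, tsum_eq_single (Finsupp.single i 1)]
  · rw [coeff_X, if_pos rfl, one_mul, prodpow_single]
  · intro K hK
    rw [coeff_X, if_neg hK, zero_mul]

lemma evS_one (x : Fin d → ℤ_[p]) : evS (1 : S) x = 1 := by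
  classical
  rw [evS, tsum_eq_single (0 : Fin d →₀ ℕ)]
  · simp
  · intro K hK
    rw [coeff_one, if_neg hK, zero_mul]

lemma evS_mul {f g : S} (hf : RsS f) (hg : RsS g) (x : Fin d → ℤ_[p]) :
    evS (f * g) x = evS f x * evS g x := by
  classical
  set F : (Fin d →₀ ℕ) → ℤ_[p] := fun K => coeff (R := ℤ_[p]) K f * ∏ j, x j ^ K j with hF
  set G : (Fin d →₀ ℕ) → ℤ_[p] := fun K => coeff (R := ℤ_[p]) K g * ∏ j, x j ^ K j with hG
  have hsF : Summable F := summable_evS hf x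
  have hsG : Summable G := summable_evS hg x
  have hsP : Summable (fun q : (Fin d →₀ ℕ) × (Fin d →₀ ℕ) => F q.1 * G q.2) := by
    refine summable_of_pdvd_cofinite fun m => ((hf m).prod (hg m)).subset fun q hq => ?_
    simp only [Set.mem_setOf_eq, Set.mem_prod] at hq ⊢
    constructor
    · intro h; exact hq ((h.mul_right _).mul_right _)
    · intro h; exact hq (((h.mul_right _)).mul_left _)
  have hmul : HasSum (fun q : (Fin d →₀ ℕ) × (Fin d →₀ ℕ) => F q.1 * G q.2)
      (evS f x * evS g x) := hsF.hasSum.mul hsG.hasSum hsP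
  have hfib := hmul.tsum_fiberwise (fun q => q.1 + q.2)
  have key : ∀ K : Fin d →₀ ℕ,
      (∑' q : ((fun q : (Fin d →₀ ℕ) × (Fin d →₀ ℕ) => q.1 + q.2) ⁻¹' {K}),
        F (q : (Fin d →₀ ℕ) × (Fin d →₀ ℕ)).1 * G (q : (Fin d →₀ ℕ) × (Fin d →₀ ℕ)).2)
      = coeff (R := ℤ_[p]) K (f * g) * ∏ j, x j ^ K j := by
    intro K
    have hset : ((fun q : (Fin d →₀ ℕ) × (Fin d →₀ ℕ) => q.1 + q.2) ⁻¹' {K})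
        = ((Finset.HasAntidiagonal.antidiagonal K : Finset ((Fin d →₀ ℕ) × (Fin d →₀ ℕ))) :
            Set ((Fin d →₀ ℕ) × (Fin d →₀ ℕ))) := by
      ext q
      simp [Finset.mem_antidiagonal]
    rw [hset, Finset.tsum_subtype' (Finset.HasAntidiagonal.antidiagonal K)
        (fun q => F q.1 * G q.2), coeff_mul, Finset.sum_mul]
    refine Finset.sum_congr rfl fun q hq => ?_
    have hqK : q.1 + q.2 = K := Finset.HasAntidiagonal.mem_antidiagonal.1 hq
    have hx : (∏ j, x j ^ q.1 j) * (∏ j, x j ^ q.2 j) = ∏ j, x j ^ K j := by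
      rw [← Finset.prod_mul_distrib]
      refine Finset.prod_congr rfl fun j _ => ?_
      rw [← pow_add, ← hqK, Finsupp.add_apply]
    rw [hF, hG]
    calc (coeff (R := ℤ_[p]) q.1 f * ∏ j, x j ^ q.1 j) * (coeff (R := ℤ_[p]) q.2 g * ∏ j, x j ^ q.2 j)
        = coeff (R := ℤ_[p]) q.1 f * coeff (R := ℤ_[p]) q.2 g *
            ((∏ j, x j ^ q.1 j) * (∏ j, x j ^ q.2 j)) := by ring
      _ = coeff (R := ℤ_[p]) q.1 f * coeff (R := ℤ_[p]) q.2 g * ∏ j, x j ^ K j := by rw [hx]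
  have hfib' : HasSum (fun K : Fin d →₀ ℕ => coeff (R := ℤ_[p]) K (f * g) * ∏ j, x j ^ K j)
      (evS f x * evS g x) := by
    refine HasSum.congr_fun hfib ?_
    intro K; exact (key K).symm
  exact hfib'.tsum_eq

lemma evS_pow {f : S} (hf : RsS f) (n : ℕ) (x : Fin d → ℤ_[p]) :
    evS (f ^ n) x = (evS f x) ^ n := by
  induction n with
  | zero => simpa using evS_one x
  | succ n ih => rw [pow_succ, evS_mul (hf.pow n) hf, ih, pow_succ]

lemma evS_prod {ι : Type*} (s : Finset ι) (g : ι → S) (hg : ∀ j ∈ s, RsS (g j))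
    (x : Fin d → ℤ_[p]) :
    evS (∏ j ∈ s, g j) x = ∏ j ∈ s, evS (g j) x := by
  classical
  induction s using Finset.induction with
  | empty => simpa using evS_one x
  | insert a s' hnotmem ih =>
    rw [Finset.prod_insert hnotmem, Finset.prod_insert hnotmem,
      evS_mul (hg a (Finset.mem_insert_self a s'))
        (rsS_prod s' g fun j hj => hg j (Finset.mem_insert_of_mem hj)),
      ih fun j hj => hg j (Finset.mem_insert_of_mem hj)]


/-! ### Composition -/

/-- Monomial product `∏ g_j ^ I_j`. -/
noncomputable def mP (g : Fin d → S) (I : Fin d →₀ ℕ) : S := ∏ j, g j ^ I j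

lemma rsS_mP {g : Fin d → S} (hg : ∀ j, RsS (g j)) (I : Fin d →₀ ℕ) : RsS (mP g I) :=
  rsS_prod _ _ fun j _ => (hg j).pow _

lemma mP_single (g : Fin d → S) (i : Fin d) : mP g (Finsupp.single i 1) = g i := by
  classical
  rw [mP, Finset.prod_eq_single i]
  · simp
  · intro j _ hj
    rw [Finsupp.single_apply, if_neg (fun h => hj h.symm), pow_zero]
  · intro h; exact absurd (Finset.mem_univ i) h

lemma mP_X (I : Fin d →₀ ℕ) :
    mP (fun j => (X j : S)) I = monomial (R := ℤ_[p]) I (1 : ℤ_[p]) := by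
  classical
  have hpoly : ∏ j ∈ I.support, (MvPolynomial.X j : MvPolynomial (Fin d) ℤ_[p]) ^ I j =
      MvPolynomial.monomial I (1 : ℤ_[p]) := MvPolynomial.prod_X_pow_eq_monomial
  have hext : ∏ j, (MvPolynomial.X j : MvPolynomial (Fin d) ℤ_[p]) ^ I j =
      ∏ j ∈ I.support, (MvPolynomial.X j : MvPolynomial (Fin d) ℤ_[p]) ^ I j := by
    refine (Finset.prod_subset (Finset.subset_univ _) ?_).symm
    intro j _ hj
    rw [Finsupp.notMem_support_iff.1 hj, pow_zero]
  have := congrArg (MvPolynomial.coeToMvPowerSeries.ringHom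
    (σ := Fin d) (R := ℤ_[p])) (hext.trans hpoly)
  rw [map_prod] at this
  simp only [map_pow, MvPolynomial.coeToMvPowerSeries.ringHom_apply, MvPolynomial.coe_X,
    MvPolynomial.coe_monomial] at this
  rw [mP]
  exact this

/-- Formal composition of a power series with a `d`-tuple of power series. -/
noncomputable def cS (f : S) (g : Fin d → S) : S :=
  fun K => ∑' I : Fin d →₀ ℕ, coeff (R := ℤ_[p]) I f * coeff (R := ℤ_[p]) K (mP g I)

lemma coeff_cS (f : S) (g : Fin d → S) (K : Fin d →₀ ℕ) :
    coeff (R := ℤ_[p]) K (cS f g) = ∑' I : Fin d →₀ ℕ, coeff (R := ℤ_[p]) I f * coeff (R := ℤ_[p]) K (mP g I) := by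
  rw [coeff_apply]; rfl

lemma summable_cS {f : S} (hf : RsS f) (g : Fin d → S) (K : Fin d →₀ ℕ) :
    Summable (fun I : Fin d →₀ ℕ => coeff (R := ℤ_[p]) I f * coeff (R := ℤ_[p]) K (mP g I)) := by
  refine summable_of_pdvd_cofinite fun m => (hf m).subset fun I hI => ?_
  simp only [Set.mem_setOf_eq] at hI ⊢
  intro h; exact hI (h.mul_right _)

lemma rsS_cS {f : S} (hf : RsS f) {g : Fin d → S} (hg : ∀ j, RsS (g j)) : RsS (cS f g) := by
  classical
  intro m
  refine (Set.Finite.biUnion (hf m) (fun I _ => (rsS_mP hg I m))).subset ?_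
  intro K hK
  simp only [Set.mem_setOf_eq, coeff_cS] at hK
  have hex : ∃ I : Fin d →₀ ℕ, ¬ (p : ℤ_[p]) ^ m ∣ coeff (R := ℤ_[p]) I f * coeff (R := ℤ_[p]) K (mP g I) := by
    by_contra h
    push_neg at h
    exact hK (pdvd_tsum m (summable_cS hf g K) h)
  obtain ⟨I, hI⟩ := hex
  refine Set.mem_biUnion (show I ∈ {I | ¬ (p : ℤ_[p]) ^ m ∣ coeff (R := ℤ_[p]) I f} from ?_) ?_
  · intro h; exact hI (h.mul_right _)
  · simp only [Set.mem_setOf_eq]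
    intro h; exact hI (h.mul_left _)

lemma cS_add_left {f₁ f₂ : S} (hf₁ : RsS f₁) (hf₂ : RsS f₂) (g : Fin d → S) :
    cS (f₁ + f₂) g = cS f₁ g + cS f₂ g := by
  refine MvPowerSeries.ext fun K => ?_
  rw [map_add, coeff_cS, coeff_cS, coeff_cS, ← Summable.tsum_add (summable_cS hf₁ g K) (summable_cS hf₂ g K)]
  refine tsum_congr fun I => ?_
  rw [map_add, add_mul]

lemma cS_X_left (i : Fin d) (g : Fin d → S) : cS (X i : S) g = g i := by
  classical
  refine MvPowerSeries.ext fun K => ?_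
  rw [coeff_cS, tsum_eq_single (Finsupp.single i 1)]
  · rw [coeff_X, if_pos rfl, one_mul, mP_single]
  · intro I hI
    rw [coeff_X, if_neg hI, zero_mul]

lemma cS_X_right (f : S) : cS f (fun j => (X j : S)) = f := by
  classical
  refine MvPowerSeries.ext fun K => ?_
  rw [coeff_cS, tsum_eq_single K]
  · rw [mP_X, coeff_monomial, if_pos rfl, mul_one]
  · intro I hI
    rw [mP_X, coeff_monomial, if_neg (fun h => hI h.symm), mul_zero]

/-- Taylor-type estimate for composition. -/
lemma cS_sub_dvd (t m : ℕ) {f : S} (hf : RsS f)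
    (hfd : ∀ K, (p : ℤ_[p]) ^ t ∣ coeff (R := ℤ_[p]) K f) (u v : Fin d → S)
    (huv : ∀ j K, (p : ℤ_[p]) ^ m ∣ coeff (R := ℤ_[p]) K (u j) - coeff (R := ℤ_[p]) K (v j))
    (K : Fin d →₀ ℕ) :
    (p : ℤ_[p]) ^ (t + m) ∣ coeff (R := ℤ_[p]) K (cS f u) - coeff (R := ℤ_[p]) K (cS f v) := by
  have hdvdC : ∀ I : Fin d →₀ ℕ,
      (p : ℤ_[p]) ^ m ∣ coeff (R := ℤ_[p]) K (mP u I) - coeff (R := ℤ_[p]) K (mP v I) := by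
    intro I
    have hC : (C (σ := Fin d) (R := ℤ_[p]) ((p : ℤ_[p]) ^ m)) ∣ mP u I - mP v I := by
      refine dvd_prodpow_sub Finset.univ _ u v (fun j => ?_) I
      rw [constC_dvd_iff]
      intro K'
      rw [map_sub]
      exact huv j K'
    have := (constC_dvd_iff _ _).1 hC K
    rwa [map_sub] at this
  rw [coeff_cS, coeff_cS,
    ← Summable.tsum_sub (summable_cS hf u K) (summable_cS hf v K)]
  refine pdvd_tsum _ ((summable_cS hf u K).sub (summable_cS hf v K)) fun I => ?_
  rw [← mul_sub, pow_add]
  exact mul_dvd_mul (hfd I) (hdvdC I)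


/-! ### Newton iteration at the level of series -/

noncomputable def newt (A : Fin d → S) : ℕ → Fin d → S
  | 0 => fun j => (X j : S)
  | n + 1 => fun j => newt A n j + ((X j : S) - cS (A j) (newt A n))

lemma newt_props {A : Fin d → S} (hA : ∀ j, RsS (A j))
    (hAc : ∀ j K, (p : ℤ_[p]) ∣ coeff (R := ℤ_[p]) K (A j) - coeff (R := ℤ_[p]) K (X j : S)) :
    ∀ n : ℕ, (∀ j, RsS (newt A n j)) ∧
      (∀ j K, (p : ℤ_[p]) ∣ coeff (R := ℤ_[p]) K (newt A n j) - coeff (R := ℤ_[p]) K (X j : S)) ∧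
      (∀ j K, (p : ℤ_[p]) ^ (n + 1) ∣
        coeff (R := ℤ_[p]) K (X j : S) - coeff (R := ℤ_[p]) K (cS (A j) (newt A n))) := by
  intro n
  induction n with
  | zero =>
    refine ⟨fun j => by rw [newt]; exact rsS_X j, fun j K => by rw [newt]; simp, fun j K => ?_⟩
    have h0 : newt A 0 = fun j => (X j : S) := rfl
    rw [h0, cS_X_right, pow_one]
    exact dvd_sub_comm.1 (hAc j K)
  | succ n ih =>
    obtain ⟨ihrs, ihcong, ihr⟩ := ih
    set g := newt A n with hg
    have hrs_r : ∀ j, RsS ((X j : S) - cS (A j) g) :=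
      fun j => (rsS_X j).sub (rsS_cS (hA j) ihrs)
    have hnewt : newt A (n + 1) = fun j => g j + ((X j : S) - cS (A j) g) := rfl
    have hrs1 : ∀ j, RsS (newt A (n + 1) j) := by
      intro j; rw [hnewt]; exact (ihrs j).add (hrs_r j)
    refine ⟨hrs1, ?_, ?_⟩
    · intro j K
      rw [hnewt]
      have : coeff (R := ℤ_[p]) K (g j + ((X j : S) - cS (A j) g)) - coeff (R := ℤ_[p]) K (X j : S)
          = (coeff (R := ℤ_[p]) K (g j) - coeff (R := ℤ_[p]) K (X j : S))
            + (coeff (R := ℤ_[p]) K (X j : S) - coeff (R := ℤ_[p]) K (cS (A j) g)) := by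
        rw [map_add, map_sub]; ring
      rw [this]
      exact dvd_add (ihcong j K)
        ((dvd_pow_self (p : ℤ_[p]) (Nat.succ_ne_zero n)).trans (ihr j K))
    · intro j K
      -- expand A j = X j + (A j - X j)
      have hAeq : (X j : S) + (A j - (X j : S)) = A j := by ring
      have hD : RsS (A j - (X j : S)) := (hA j).sub (rsS_X j)
      have hexp : ∀ h : Fin d → S,
          cS (A j) h = h j + cS (A j - (X j : S)) h := by
        intro h
        conv_lhs => rw [← hAeq]
        rw [cS_add_left (rsS_X j) hD, cS_X_left]
      have hDc : ∀ K', (p : ℤ_[p]) ^ 1 ∣ coeff (R := ℤ_[p]) K' (A j - (X j : S)) := by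
        intro K'
        rw [pow_one, map_sub]
        exact hAc j K'
      have hdiff : ∀ j' K', (p : ℤ_[p]) ^ (n + 1) ∣
          coeff (R := ℤ_[p]) K' (g j') - coeff (R := ℤ_[p]) K' (newt A (n + 1) j') := by
        intro j' K'
        rw [hnewt]
        have : coeff (R := ℤ_[p]) K' (g j') -
            coeff (R := ℤ_[p]) K' (g j' + ((X j' : S) - cS (A j') g))
            = -(coeff (R := ℤ_[p]) K' (X j' : S) - coeff (R := ℤ_[p]) K' (cS (A j') g)) := by
          rw [map_add, map_sub]; ring
        rw [this]
        exact dvd_neg.2 (ihr j' K')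
      have htaylor := cS_sub_dvd 1 (n + 1) hD hDc g (newt A (n + 1)) hdiff K
      have hnj : coeff (R := ℤ_[p]) K (newt A (n + 1) j)
          = coeff (R := ℤ_[p]) K (g j) + (coeff (R := ℤ_[p]) K (X j : S)
            - (coeff (R := ℤ_[p]) K (g j) + coeff (R := ℤ_[p]) K (cS (A j - (X j : S)) g))) := by
        have h1 : newt A (n + 1) j = g j + ((X j : S) - cS (A j) g) := rfl
        rw [h1, hexp g, map_add, map_sub, map_add]
      have hrewrite : coeff (R := ℤ_[p]) K (X j : S) - coeff (R := ℤ_[p]) K (cS (A j) (newt A (n + 1)))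
          = coeff (R := ℤ_[p]) K (cS (A j - (X j : S)) g)
            - coeff (R := ℤ_[p]) K (cS (A j - (X j : S)) (newt A (n + 1))) := by
        rw [hexp (newt A (n + 1)), map_add, hnj]
        ring
      rw [hrewrite]
      have : (p : ℤ_[p]) ^ (n + 1 + 1) ∣
          coeff (R := ℤ_[p]) K (cS (A j - (X j : S)) g)
            - coeff (R := ℤ_[p]) K (cS (A j - (X j : S)) (newt A (n + 1))) := by
        have : 1 + (n + 1) = n + 1 + 1 := by ring
        rw [← this]
        exact htaylor
      exact this


/-! ### The formal inverse -/

lemma exists_formal_inverse {A : Fin d → S} (hA : ∀ j, RsS (A j))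
    (hAc : ∀ j K, (p : ℤ_[p]) ∣ coeff (R := ℤ_[p]) K (A j) - coeff (R := ℤ_[p]) K (X j : S)) :
    ∃ B : Fin d → S, (∀ j, RsS (B j)) ∧
      (∀ j K, (p : ℤ_[p]) ∣ coeff (R := ℤ_[p]) K (B j) - coeff (R := ℤ_[p]) K (X j : S)) ∧
      (∀ i, cS (A i) B = (X i : S)) := by
  classical
  have props := newt_props hA hAc
  -- increments
  have hinc : ∀ n j K, (p : ℤ_[p]) ^ (n + 1) ∣
      coeff (R := ℤ_[p]) K (newt A (n + 1) j) - coeff (R := ℤ_[p]) K (newt A n j) := by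
    intro n j K
    have h1 : newt A (n + 1) j = newt A n j + ((X j : S) - cS (A j) (newt A n)) := rfl
    rw [h1, map_add, add_sub_cancel_left, map_sub]
    exact (props n).2.2 j K
  -- stability
  have hstab : ∀ N n, N ≤ n → ∀ j K, (p : ℤ_[p]) ^ (N + 1) ∣
      coeff (R := ℤ_[p]) K (newt A n j) - coeff (R := ℤ_[p]) K (newt A N j) := by
    intro N n hNn
    induction n, hNn using Nat.le_induction with
    | base => intro j K; simp
    | succ n hNn ih =>
      intro j K
      have : coeff (R := ℤ_[p]) K (newt A (n + 1) j) - coeff (R := ℤ_[p]) K (newt A N j)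
          = (coeff (R := ℤ_[p]) K (newt A (n + 1) j) - coeff (R := ℤ_[p]) K (newt A n j))
            + (coeff (R := ℤ_[p]) K (newt A n j) - coeff (R := ℤ_[p]) K (newt A N j)) := by ring
      rw [this]
      exact dvd_add ((pow_dvd_pow _ (by omega)).trans (hinc n j K)) (ih j K)
  -- Cauchy, limits
  have hcauchy : ∀ j K, ∃ l : ℤ_[p],
      Tendsto (fun n => coeff (R := ℤ_[p]) K (newt A n j)) atTop (nhds l) := by
    intro j K
    refine cauchySeq_tendsto_of_complete (cauchySeq_of_le_tendsto_0
      (fun N => (p : ℝ) ^ (-(N : ℤ))) (fun n m N hn hm => ?_) tendsto_pow_neg)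
    rw [dist_eq_norm]
    rw [← pdvd_iff_norm]
    have : coeff (R := ℤ_[p]) K (newt A n j) - coeff (R := ℤ_[p]) K (newt A m j)
        = (coeff (R := ℤ_[p]) K (newt A n j) - coeff (R := ℤ_[p]) K (newt A N j))
          - (coeff (R := ℤ_[p]) K (newt A m j) - coeff (R := ℤ_[p]) K (newt A N j)) := by ring
    rw [this]
    exact dvd_sub ((pow_dvd_pow _ (by omega)).trans (hstab N n hn j K))
      ((pow_dvd_pow _ (by omega)).trans (hstab N m hm j K))
  choose lfun hl using hcauchy
  set B : Fin d → S := fun j => (fun K => lfun j K) with hB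
  have hBcoeff : ∀ j K, coeff (R := ℤ_[p]) K (B j) = lfun j K := fun j K => rfl
  -- the limit is close to each iterate
  have hL0 : ∀ N j K, (p : ℤ_[p]) ^ (N + 1) ∣
      coeff (R := ℤ_[p]) K (B j) - coeff (R := ℤ_[p]) K (newt A N j) := by
    intro N j K
    rw [hBcoeff]
    rw [pdvd_iff_norm]
    have hcl : IsClosed {z : ℤ_[p] |
        ‖z - coeff (R := ℤ_[p]) K (newt A N j)‖ ≤ (p : ℝ) ^ (-((N + 1 : ℕ) : ℤ))} :=
      isClosed_le ((continuous_id.sub continuous_const).norm) continuous_const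
    have := hcl.mem_of_tendsto (hl j K) (Filter.eventually_atTop.2 ⟨N, fun n hn => ?_⟩)
    · exact this
    · simp only [Set.mem_setOf_eq]
      rw [← pdvd_iff_norm]
      exact hstab N n hn j K
  refine ⟨B, ?_, ?_, ?_⟩
  · -- restricted
    intro j m
    refine ((props m).1 j m).subset fun K hK => ?_
    simp only [Set.mem_setOf_eq] at hK ⊢
    intro h
    refine hK ?_
    have h2 : (p : ℤ_[p]) ^ m ∣ coeff (R := ℤ_[p]) K (B j) - coeff (R := ℤ_[p]) K (newt A m j) :=
      (pow_dvd_pow _ (by omega)).trans (hL0 m j K)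
    have : coeff (R := ℤ_[p]) K (B j) = (coeff (R := ℤ_[p]) K (B j) - coeff (R := ℤ_[p]) K (newt A m j))
        + coeff (R := ℤ_[p]) K (newt A m j) := by ring
    rw [this]
    exact dvd_add h2 h
  · -- congruent to X mod p
    intro j K
    have := hL0 0 j K
    have h0 : newt A 0 j = (X j : S) := rfl
    rw [h0] at this
    rw [pow_one] at this
    exact this
  · -- the composition identity
    intro i
    refine MvPowerSeries.ext fun K => ?_
    refine eq_of_forall_pdvd fun m => ?_
    have hBrs : ∀ j, RsS (B j) := by
      intro j m'
      refine ((props m').1 j m').subset fun K hK => ?_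
      simp only [Set.mem_setOf_eq] at hK ⊢
      intro h
      refine hK ?_
      have h2 : (p : ℤ_[p]) ^ m' ∣ coeff (R := ℤ_[p]) K (B j) - coeff (R := ℤ_[p]) K (newt A m' j) :=
        (pow_dvd_pow _ (by omega)).trans (hL0 m' j K)
      have : coeff (R := ℤ_[p]) K (B j) = (coeff (R := ℤ_[p]) K (B j) - coeff (R := ℤ_[p]) K (newt A m' j))
          + coeff (R := ℤ_[p]) K (newt A m' j) := by ring
      rw [this]
      exact dvd_add h2 h
    have h1 : (p : ℤ_[p]) ^ (m + 1) ∣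
        coeff (R := ℤ_[p]) K (cS (A i) B) - coeff (R := ℤ_[p]) K (cS (A i) (newt A m)) := by
      have := cS_sub_dvd 0 (m + 1) (hA i) (fun K' => by rw [pow_zero]; exact one_dvd _)
        B (newt A m) (fun j K' => hL0 m j K') K
      simpa using this
    have h2 : (p : ℤ_[p]) ^ (m + 1) ∣
        coeff (R := ℤ_[p]) K (cS (A i) (newt A m)) - coeff (R := ℤ_[p]) K (X i : S) :=
      dvd_sub_comm.1 ((props m).2.2 i K)
    have : coeff (R := ℤ_[p]) K (cS (A i) B) - coeff (R := ℤ_[p]) K (X i : S)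
        = (coeff (R := ℤ_[p]) K (cS (A i) B) - coeff (R := ℤ_[p]) K (cS (A i) (newt A m)))
          + (coeff (R := ℤ_[p]) K (cS (A i) (newt A m)) - coeff (R := ℤ_[p]) K (X i : S)) := by ring
    rw [this]
    exact (pow_dvd_pow _ (by omega)).trans (dvd_add h1 h2)


/-! ### Evaluation commutes with composition -/

lemma evS_cS {f : S} (hf : RsS f) {g : Fin d → S} (hg : ∀ j, RsS (g j))
    (x : Fin d → ℤ_[p]) :
    evS (cS f g) x = evS f (fun j => evS (g j) x) := by
  classical
  set h : ((Fin d →₀ ℕ) × (Fin d →₀ ℕ)) → ℤ_[p] :=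
    fun q => coeff (R := ℤ_[p]) q.1 f * (coeff (R := ℤ_[p]) q.2 (mP g q.1) * ∏ j, x j ^ q.2 j) with hh
  have hsum : Summable h := by
    refine summable_of_pdvd_cofinite fun m => ?_
    refine (Set.Finite.biUnion (hf m) (fun I _ =>
      ((Set.finite_singleton I).prod (rsS_mP hg I m)))).subset ?_
    intro q hq
    simp only [Set.mem_setOf_eq, hh] at hq
    have h1 : ¬ (p : ℤ_[p]) ^ m ∣ coeff (R := ℤ_[p]) q.1 f := by
      intro hdvd; exact hq (hdvd.mul_right _)
    have h2 : ¬ (p : ℤ_[p]) ^ m ∣ coeff (R := ℤ_[p]) q.2 (mP g q.1) := by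
      intro hdvd; exact hq ((hdvd.mul_right _).mul_left _)
    refine Set.mem_biUnion h1 ?_
    exact Set.mem_prod.2 ⟨rfl, h2⟩
  have step1 : evS (cS f g) x = ∑' K : Fin d →₀ ℕ, ∑' I : Fin d →₀ ℕ, h (I, K) := by
    rw [evS]
    refine tsum_congr fun K => ?_
    rw [coeff_cS, ← Summable.tsum_mul_right _ (summable_cS hf g K)]
    refine tsum_congr fun I => ?_
    rw [hh, mul_assoc]
  have step2 : ∑' K : Fin d →₀ ℕ, ∑' I : Fin d →₀ ℕ, h (I, K)
      = ∑' I : Fin d →₀ ℕ, ∑' K : Fin d →₀ ℕ, h (I, K) := by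
    have e1 := Summable.tsum_prod (f := fun q : (Fin d →₀ ℕ) × (Fin d →₀ ℕ) => h q.swap)
      hsum.prod_symm
    have e2 := Summable.tsum_prod (f := h) hsum
    have e3 : ∑' q : (Fin d →₀ ℕ) × (Fin d →₀ ℕ), h q.swap
        = ∑' q : (Fin d →₀ ℕ) × (Fin d →₀ ℕ), h q :=
      Equiv.tsum_eq (Equiv.prodComm _ _) h
    rw [e3, e2] at e1
    exact e1.symm
  have step3 : evS f (fun j => evS (g j) x)
      = ∑' I : Fin d →₀ ℕ, ∑' K : Fin d →₀ ℕ, h (I, K) := by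
    rw [evS]
    refine tsum_congr fun I => ?_
    have hev : (∏ j, (evS (g j) x) ^ I j) = evS (mP g I) x := by
      rw [mP, evS_prod Finset.univ _ (fun j _ => (hg j).pow (I j)) x]
      exact Finset.prod_congr rfl fun j _ => (evS_pow (hg j) (I j) x).symm
    rw [hev, evS, ← Summable.tsum_mul_left _ (summable_evS (rsS_mP hg I) x)]
  rw [step1, step2, step3]

end RPSHensel


/-- A family of coefficients indexed by multi-indices in `d` variables is
*restricted* if for every `m` all but finitely many coefficients are divisible
by `p^m`. -/
def IsRestricted (p : ℕ) [Fact p.Prime] {d : ℕ} (a : (Fin d → ℕ) → ℤ_[p]) : Prop :=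
  ∀ m : ℕ, {I : Fin d → ℕ | ¬ (p : ℤ_[p]) ^ m ∣ a I}.Finite

/-- Evaluation map `ℤ_p^d → ℤ_p^d` of a `d`-tuple of restricted power series in
`d` variables. -/
noncomputable def evalFamily (p : ℕ) [Fact p.Prime] {d : ℕ}
    (a : Fin d → (Fin d → ℕ) → ℤ_[p]) (x : Fin d → ℤ_[p]) : Fin d → ℤ_[p] :=
  fun i => ∑' I : Fin d → ℕ, a i I * ∏ j, x j ^ I j

namespace RPSHensel

variable {p : ℕ} [Fact p.Prime] {d : ℕ}

local notation "e" => (Finsupp.equivFunOnFinite : (Fin d →₀ ℕ) ≃ (Fin d → ℕ))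

lemma e_single (i : Fin d) : e (Finsupp.single i 1) = Pi.single i 1 := by
  classical
  exact Finsupp.single_eq_pi_single i 1

lemma coeff_X_ite (i : Fin d) (K : Fin d →₀ ℕ) :
    MvPowerSeries.coeff (R := ℤ_[p]) K (MvPowerSeries.X i) =
      if e K = Pi.single i 1 then 1 else 0 := by
  classical
  rw [MvPowerSeries.coeff_X]
  congr 1
  have : (e K = Pi.single i 1) ↔ (K = Finsupp.single i 1) := by
    rw [← e_single i]
    exact (Equiv.apply_eq_iff_eq e)
  simp only [this]

lemma evalFamily_eq (c : Fin d → (Fin d → ℕ) → ℤ_[p]) (x : Fin d → ℤ_[p]) (i : Fin d) :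
    evalFamily p c x i =
      evS ((fun K => c i (e K)) : MvPowerSeries (Fin d) ℤ_[p]) x := by
  show (∑' I : Fin d → ℕ, c i I * ∏ j, x j ^ I j) = _
  unfold evS
  rw [← Equiv.tsum_eq e (fun I => c i I * ∏ j, x j ^ I j)]
  rfl

end RPSHensel

/-- Hensel-type invertibility: a `d`-tuple of restricted power series, each
congruent to the corresponding coordinate variable modulo `p`, defines a
bijection of `ℤ_p^d`, whose inverse is again given by restricted power series
congruent to the coordinates modulo `p`. -/
theorem restricted_power_series_hensel_inverse (p : ℕ) [Fact p.Prime]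
    (d : ℕ) (hd : 1 ≤ d) (a : Fin d → (Fin d → ℕ) → ℤ_[p])
    (ha : ∀ i, IsRestricted p (a i))
    (hcong : ∀ i I, (p : ℤ_[p]) ∣ (a i I - if I = Pi.single i 1 then 1 else 0)) :
    Function.Bijective (evalFamily p a) ∧
    ∃ b : Fin d → (Fin d → ℕ) → ℤ_[p],
      (∀ i, IsRestricted p (b i)) ∧
      (∀ i I, (p : ℤ_[p]) ∣ (b i I - if I = Pi.single i 1 then 1 else 0)) ∧
      Function.LeftInverse (evalFamily p b) (evalFamily p a) ∧
      Function.RightInverse (evalFamily p b) (evalFamily p a) := by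
  classical
  open RPSHensel in
  set e := (Finsupp.equivFunOnFinite : (Fin d →₀ ℕ) ≃ (Fin d → ℕ)) with he
  set A : Fin d → MvPowerSeries (Fin d) ℤ_[p] := fun i => fun K => a i (e K) with hA
  have hcoeffA : ∀ i K, MvPowerSeries.coeff (R := ℤ_[p]) K (A i) = a i (e K) := fun i K => rfl
  have hAres : ∀ i, RPSHensel.RsS (A i) := by
    intro i m
    have hset : {K : Fin d →₀ ℕ | ¬ (p : ℤ_[p]) ^ m ∣ MvPowerSeries.coeff (R := ℤ_[p]) K (A i)}
        = e ⁻¹' {I : Fin d → ℕ | ¬ (p : ℤ_[p]) ^ m ∣ a i I} := rfl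
    rw [hset]
    exact (ha i m).preimage (e.injective.injOn)
  have hAc : ∀ i K, (p : ℤ_[p]) ∣
      MvPowerSeries.coeff (R := ℤ_[p]) K (A i) - MvPowerSeries.coeff (R := ℤ_[p]) K (MvPowerSeries.X i) := by
    intro i K
    rw [hcoeffA, RPSHensel.coeff_X_ite]
    exact hcong i (e K)
  obtain ⟨B, hBres, hBc, hBid⟩ := RPSHensel.exists_formal_inverse hAres hAc
  obtain ⟨Cc, hCres, hCc, hCid⟩ := RPSHensel.exists_formal_inverse hBres hBc
  set b : Fin d → (Fin d → ℕ) → ℤ_[p] :=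
    fun i I => MvPowerSeries.coeff (R := ℤ_[p]) (e.symm I) (B i) with hb
  set c : Fin d → (Fin d → ℕ) → ℤ_[p] :=
    fun i I => MvPowerSeries.coeff (R := ℤ_[p]) (e.symm I) (Cc i) with hc
  have hbB : ∀ i, ((fun K => b i (e K)) : MvPowerSeries (Fin d) ℤ_[p]) = B i := by
    intro i
    funext K
    show MvPowerSeries.coeff (R := ℤ_[p]) (e.symm (e K)) (B i) = B i K
    rw [Equiv.symm_apply_apply]
    rfl
  have hcC : ∀ i, ((fun K => c i (e K)) : MvPowerSeries (Fin d) ℤ_[p]) = Cc i := by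
    intro i
    funext K
    show MvPowerSeries.coeff (R := ℤ_[p]) (e.symm (e K)) (Cc i) = Cc i K
    rw [Equiv.symm_apply_apply]
    rfl
  have haA : ∀ i, ((fun K => a i (e K)) : MvPowerSeries (Fin d) ℤ_[p]) = A i := fun i => rfl
  -- F ∘ G = id
  have hFG : ∀ x, evalFamily p a (evalFamily p b x) = x := by
    intro x
    funext i
    rw [RPSHensel.evalFamily_eq a _ i]
    have h2 : evalFamily p b x = fun j => RPSHensel.evS (B j) x := by
      funext j
      rw [RPSHensel.evalFamily_eq b x j, hbB j]
    rw [h2, haA i, ← RPSHensel.evS_cS (hAres i) hBres x, hBid i, RPSHensel.evS_X]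
  -- G ∘ H = id
  have hGH : ∀ x, evalFamily p b (evalFamily p c x) = x := by
    intro x
    funext i
    rw [RPSHensel.evalFamily_eq b _ i, hbB i]
    have h2 : evalFamily p c x = fun j => RPSHensel.evS (Cc j) x := by
      funext j
      rw [RPSHensel.evalFamily_eq c x j, hcC j]
    rw [h2, ← RPSHensel.evS_cS (hBres i) hCres x, hCid i, RPSHensel.evS_X]
  -- G ∘ F = id
  have hGF : ∀ x, evalFamily p b (evalFamily p a x) = x := by
    intro x
    conv_lhs => rw [← hGH x]
    rw [hFG (evalFamily p c x), hGH x]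
  refine ⟨⟨fun x y hxy => ?_, fun y => ⟨evalFamily p b y, hFG y⟩⟩, b, ?_, ?_, hGF, hFG⟩
  · have := congrArg (evalFamily p b) hxy
    rwa [hGF x, hGF y] at this
  · intro i m
    have hset : {I : Fin d → ℕ | ¬ (p : ℤ_[p]) ^ m ∣ b i I}
        = e.symm ⁻¹' {K : Fin d →₀ ℕ | ¬ (p : ℤ_[p]) ^ m ∣ MvPowerSeries.coeff (R := ℤ_[p]) K (B i)} :=
      rfl
    rw [hset]
    exact (hBres i m).preimage (e.symm.injective.injOn)
  · intro i I
    have := hBc i (e.symm I)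
    rw [RPSHensel.coeff_X_ite, Equiv.apply_symm_apply] at this
    exact this
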